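/- Define H_cns = closure[ span{ (A − μ)^{-1}x : Im μ < 0, x ∈ M } + span{ (A* − λ)^{-1}x : Im λ > 0, x ∈ M } ], where M = Ran((Γ(A + i)^{-1})*) ∪ Ran((Γ_*(A* − i)^{-1})*) ⊆ H, and let H_sa = H ⊖ H_cns be its orthogonal complement. Then: (i) H_cns is a reducing subspace for A, i.e. both H_cns and H_sa are invariant for A (a closed subspace K is invariant for A if the orthogonal projection P_K satisfies P_K D(A) ⊆ D(A) and A P_K h ∈ K for all h ∈ D(A)); (ii) the restriction A_sa of A to H_sa, with domain P_{H_sa}D(A), is a selfadjoint operator in the Hilbert space H_sa; (iii) the restriction A_cns of A to H_cns, with domain P_{H_cns}D(A), is completely non-selfadjoint in H_cns, i.e. there is no nonzero closed subspace W ⊆ H_cns which is reducing for A_cns and such that the restriction of A_cns to W is selfadjoint in W. -/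

import Mathlib

open scoped ComplexInnerProductSpace

noncomputable section

/-- A maximal dissipative operator on a complex Hilbert space `H`, together with the
(derivable) data of its resolvent on the open lower half-plane and the resolvent of its
adjoint on the open upper half-plane.  Here the inner product `⟪·,·⟫` is conjugate-linear
in the first variable, so that the paper's `⟨x, y⟩` corresponds to `⟪y, x⟫`. -/
structure MDO (H : Type*) [NormedAddCommGroup H] [InnerProductSpace ℂ H]
    [CompleteSpace H] where
  /-- The underlying densely defined operator. -/
  A : H →ₗ.[ℂ] H
  dense_dom : Dense (A.domain : Set H)
  dissipative : ∀ u : A.domain, 0 ≤ (⟪(u : H), A u⟫).im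
  /-- `R z` is the bounded inverse `(A - z)⁻¹`, for `Im z < 0`. -/
  R : ℂ → H →L[ℂ] H
  R_mem : ∀ z, z.im < 0 → ∀ h : H, R z h ∈ A.domain
  R_right : ∀ z (hz : z.im < 0) (h : H), A ⟨R z h, R_mem z hz h⟩ - z • R z h = h
  R_left : ∀ z, z.im < 0 → ∀ u : A.domain, R z (A u - z • (u : H)) = (u : H)
  dense_dom_star : Dense (A.adjoint.domain : Set H)
  anti_dissipative_star : ∀ u : A.adjoint.domain, (⟪(u : H), A.adjoint u⟫).im ≤ 0
  /-- `Rs z` is the bounded inverse `(A* - z)⁻¹`, for `Im z > 0`. -/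
  Rs : ℂ → H →L[ℂ] H
  Rs_mem : ∀ z, 0 < z.im → ∀ h : H, Rs z h ∈ A.adjoint.domain
  Rs_right : ∀ z (hz : 0 < z.im) (h : H),
    A.adjoint ⟨Rs z h, Rs_mem z hz h⟩ - z • Rs z h = h
  Rs_left : ∀ z, 0 < z.im → ∀ u : A.adjoint.domain,
    Rs z (A.adjoint u - z • (u : H)) = (u : H)

/-- A maximal dissipative operator together with boundary operators `Γ`, `Γ_*` satisfying
the abstract Lagrange identities, and the bounded compositions `ΓR z = Γ ∘ (A - z)⁻¹`
(for `Im z < 0`) and `ΓsRs z = Γ_* ∘ (A* - z)⁻¹` (for `Im z > 0`). -/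
structure StrausSetting (H E Es : Type*)
    [NormedAddCommGroup H] [InnerProductSpace ℂ H] [CompleteSpace H]
    [NormedAddCommGroup E] [InnerProductSpace ℂ E] [CompleteSpace E]
    [NormedAddCommGroup Es] [InnerProductSpace ℂ Es] [CompleteSpace Es]
    extends MDO H where
  Γ : A.domain →ₗ[ℂ] E
  Γ_bdd : ∃ C : ℝ, ∀ u : A.domain, ‖Γ u‖ ≤ C * (‖(u : H)‖ + ‖A u‖)
  Γ_dense : DenseRange Γ
  lagrange : ∀ u v : A.domain,
    ⟪(v : H), A u⟫ - ⟪A v, (u : H)⟫ = Complex.I * ⟪Γ v, Γ u⟫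
  Γs : A.adjoint.domain →ₗ[ℂ] Es
  Γs_bdd : ∃ C : ℝ, ∀ u : A.adjoint.domain,
    ‖Γs u‖ ≤ C * (‖(u : H)‖ + ‖A.adjoint u‖)
  Γs_dense : DenseRange Γs
  lagrange_star : ∀ u v : A.adjoint.domain,
    ⟪(v : H), A.adjoint u⟫ - ⟪A.adjoint v, (u : H)⟫ = -Complex.I * ⟪Γs v, Γs u⟫
  /-- `ΓR z = Γ ∘ (A - z)⁻¹` as a bounded operator `H →L[ℂ] E`, for `Im z < 0`. -/
  ΓR : ℂ → H →L[ℂ] E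
  ΓR_spec : ∀ z (hz : z.im < 0) (h : H), ΓR z h = Γ ⟨R z h, R_mem z hz h⟩
  /-- `ΓsRs z = Γ_* ∘ (A* - z)⁻¹` as a bounded operator `H →L[ℂ] Es`, for `Im z > 0`. -/
  ΓsRs : ℂ → H →L[ℂ] Es
  ΓsRs_spec : ∀ z (hz : 0 < z.im) (h : H), ΓsRs z h = Γs ⟨Rs z h, Rs_mem z hz h⟩

variable {H E Es : Type*}
    [NormedAddCommGroup H] [InnerProductSpace ℂ H] [CompleteSpace H]
    [NormedAddCommGroup E] [InnerProductSpace ℂ E] [CompleteSpace E]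
    [NormedAddCommGroup Es] [InnerProductSpace ℂ Es] [CompleteSpace Es]

/-- The set `M = Ran((Γ(A + i)⁻¹)*) ∪ Ran((Γ_*(A* - i)⁻¹)*) ⊆ H`. -/
def StrausSetting.MSet (M : StrausSetting H E Es) (l1 l2 : ℂ) : Set H :=
  Set.range (ContinuousLinearMap.adjoint (M.ΓR (-l1)))
    ∪ Set.range (ContinuousLinearMap.adjoint (M.ΓsRs l2))

/-- `H_cns`, the closure of
`span{(A - μ)⁻¹ x : Im μ < 0, x ∈ M} + span{(A* - λ)⁻¹ x : Im λ > 0, x ∈ M}`. -/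
noncomputable def StrausSetting.cnsSubspace (M : StrausSetting H E Es) (l1 l2 : ℂ) :
    Submodule ℂ H :=
  (Submodule.span ℂ
    ({y | ∃ (mu : ℂ) (x : H), mu.im < 0 ∧ x ∈ M.MSet l1 l2 ∧ y = M.R mu x}
      ∪ {y | ∃ (lam : ℂ) (x : H), 0 < lam.im ∧ x ∈ M.MSet l1 l2 ∧
          y = M.Rs lam x})).topologicalClosure

/-- `P` is the orthogonal projection of `H` onto the subspace `K`. -/
structure IsOrthProjOn (K : Submodule ℂ H) (P : H →L[ℂ] H) : Prop where
  mem : ∀ x : H, P x ∈ K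
  id_of_mem : ∀ x ∈ K, P x = x
  sub_mem_orth : ∀ x : H, x - P x ∈ Kᗮ

/-- `K` is an invariant subspace for the partially defined operator `T`:
`P_K D(T) ⊆ D(T)` and `T P_K h ∈ K` for all `h ∈ D(T)`, where `P_K` is the orthogonal
projection onto `K`. -/
def PMapInvariant (T : H →ₗ.[ℂ] H) (K : Submodule ℂ H) : Prop :=
  ∃ P : H →L[ℂ] H, IsOrthProjOn K P ∧
    ∀ u : T.domain, ∃ h : P (u : H) ∈ T.domain, T ⟨P (u : H), h⟩ ∈ K

/-- `W` is invariant for the restriction of `T` to the (reducing) subspace `K`: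
for the orthogonal projection `P_W` onto `W`, `P_W` maps `D(T) ∩ K` into `D(T)`, and
`T P_W u ∈ W` for `u ∈ D(T) ∩ K`. -/
def RelInvariant (T : H →ₗ.[ℂ] H) (K W : Submodule ℂ H) : Prop :=
  ∃ P : H →L[ℂ] H, IsOrthProjOn W P ∧
    ∀ u : T.domain, (u : H) ∈ K →
      ∃ h : P (u : H) ∈ T.domain, T ⟨P (u : H), h⟩ ∈ W

/-- The restriction of `T` to the subspace `K` (with domain `D(T) ∩ K`) is a selfadjoint
operator in the Hilbert space `K`: it is densely defined in `K`, maps into `K`, is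
symmetric, and both `B ± i` are surjective onto `K` (the standard criterion for
selfadjointness of a symmetric operator). -/
def IsSelfAdjointOn (T : H →ₗ.[ℂ] H) (K : Submodule ℂ H) : Prop :=
  ((K : Set H) ⊆ closure ((K : Set H) ∩ (T.domain : Set H))) ∧
  (∀ u : T.domain, (u : H) ∈ K → T u ∈ K) ∧
  (∀ u v : T.domain, (u : H) ∈ K → (v : H) ∈ K →
    ⟪(v : H), T u⟫ = ⟪T v, (u : H)⟫) ∧
  (∀ f ∈ K, ∃ u : T.domain, (u : H) ∈ K ∧ T u - Complex.I • (u : H) = f) ∧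
  (∀ f ∈ K, ∃ u : T.domain, (u : H) ∈ K ∧ T u + Complex.I • (u : H) = f)


namespace StrausSetting

open Complex ContinuousLinearMap

variable (M : StrausSetting H E Es)

/-- The adjoint pairing. -/
lemma adj_pair (v : M.A.adjoint.domain) (u : M.A.domain) :
    ⟪(M.A.adjoint v : H), (u : H)⟫ = ⟪(v : H), M.A u⟫ :=
  LinearPMap.adjoint_isFormalAdjoint M.dense_dom v u

lemma R_norm_le (z : ℂ) (hz : z.im < 0) (h : H) :
    ‖M.R z h‖ ≤ ‖h‖ / (-z.im) := by
  have key : (-z.im) * ‖M.R z h‖ ^ 2 ≤ ‖h‖ * ‖M.R z h‖ := by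
    set u : M.A.domain := ⟨M.R z h, M.R_mem z hz h⟩ with hu
    have hAu : M.A u - z • (u : H) = h := M.R_right z hz h
    have h1 : (-z.im) * ‖(u : H)‖ ^ 2 ≤ (⟪(u : H), M.A u - z • (u : H)⟫).im := by
      rw [inner_sub_right, inner_smul_right]
      have hd := M.dissipative u
      have hn : (z * ⟪(u : H), (u : H)⟫).im = z.im * ‖(u : H)‖ ^ 2 := by
        have e1 : (⟪(u : H), (u : H)⟫ : ℂ).im = 0 := inner_self_im (𝕜 := ℂ) _
        have e2 : (⟪(u : H), (u : H)⟫ : ℂ).re = ‖(u : H)‖ ^ 2 := inner_self_eq_norm_sq (𝕜 := ℂ) _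
        rw [Complex.mul_im, e1, e2]
        ring
      rw [Complex.sub_im, hn]
      nlinarith
    have h2 : (⟪(u : H), M.A u - z • (u : H)⟫).im ≤ ‖M.A u - z • (u : H)‖ * ‖(u : H)‖ := by
      calc (⟪(u : H), M.A u - z • (u : H)⟫).im
          ≤ |(⟪(u : H), M.A u - z • (u : H)⟫).im| := le_abs_self _
        _ ≤ ‖⟪(u : H), M.A u - z • (u : H)⟫‖ := Complex.abs_im_le_norm _
        _ = ‖⟪(u : H), M.A u - z • (u : H)⟫‖ := rfl
        _ ≤ ‖(u : H)‖ * ‖M.A u - z • (u : H)‖ := norm_inner_le_norm _ _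
        _ = ‖M.A u - z • (u : H)‖ * ‖(u : H)‖ := mul_comm _ _
    rw [hAu] at h1 h2
    calc (-z.im) * ‖M.R z h‖ ^ 2 = (-z.im) * ‖(u : H)‖ ^ 2 := rfl
      _ ≤ ‖h‖ * ‖(u : H)‖ := le_trans h1 h2
      _ = ‖h‖ * ‖M.R z h‖ := rfl
  rcases (norm_nonneg (M.R z h)).eq_or_lt with h0 | h0
  · rw [← h0]
    exact div_nonneg (norm_nonneg h) (by linarith)
  · rw [le_div_iff₀ (by linarith : (0:ℝ) < -z.im)]
    nlinarith

lemma Rs_norm_le (z : ℂ) (hz : 0 < z.im) (h : H) :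
    ‖M.Rs z h‖ ≤ ‖h‖ / z.im := by
  have key : z.im * ‖M.Rs z h‖ ^ 2 ≤ ‖h‖ * ‖M.Rs z h‖ := by
    set u : M.A.adjoint.domain := ⟨M.Rs z h, M.Rs_mem z hz h⟩ with hu
    have hAu : M.A.adjoint u - z • (u : H) = h := M.Rs_right z hz h
    have h1 : z.im * ‖(u : H)‖ ^ 2 ≤ -(⟪(u : H), M.A.adjoint u - z • (u : H)⟫).im := by
      rw [inner_sub_right, inner_smul_right]
      have hd := M.anti_dissipative_star u
      have hn : (z * ⟪(u : H), (u : H)⟫).im = z.im * ‖(u : H)‖ ^ 2 := by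
        have e1 : (⟪(u : H), (u : H)⟫ : ℂ).im = 0 := inner_self_im (𝕜 := ℂ) _
        have e2 : (⟪(u : H), (u : H)⟫ : ℂ).re = ‖(u : H)‖ ^ 2 := inner_self_eq_norm_sq (𝕜 := ℂ) _
        rw [Complex.mul_im, e1, e2]
        ring
      rw [Complex.sub_im, hn]
      nlinarith
    have h2 : -(⟪(u : H), M.A.adjoint u - z • (u : H)⟫).im
        ≤ ‖M.A.adjoint u - z • (u : H)‖ * ‖(u : H)‖ := by
      calc -(⟪(u : H), M.A.adjoint u - z • (u : H)⟫).im
          ≤ |(⟪(u : H), M.A.adjoint u - z • (u : H)⟫).im| := neg_le_abs _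
        _ ≤ ‖⟪(u : H), M.A.adjoint u - z • (u : H)⟫‖ := Complex.abs_im_le_norm _
        _ = ‖⟪(u : H), M.A.adjoint u - z • (u : H)⟫‖ := rfl
        _ ≤ ‖(u : H)‖ * ‖M.A.adjoint u - z • (u : H)‖ := norm_inner_le_norm _ _
        _ = ‖M.A.adjoint u - z • (u : H)‖ * ‖(u : H)‖ := mul_comm _ _
    rw [hAu] at h1 h2
    calc z.im * ‖M.Rs z h‖ ^ 2 = z.im * ‖(u : H)‖ ^ 2 := rfl
      _ ≤ ‖h‖ * ‖(u : H)‖ := le_trans h1 h2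
      _ = ‖h‖ * ‖M.Rs z h‖ := rfl
  rcases (norm_nonneg (M.Rs z h)).eq_or_lt with h0 | h0
  · rw [← h0]
    exact div_nonneg (norm_nonneg h) (by linarith)
  · rw [le_div_iff₀ hz]
    nlinarith

/-- The resolvent identity for `R`. -/
lemma R_id (z w : ℂ) (hz : z.im < 0) (hw : w.im < 0) (h : H) :
    M.R z h = M.R w h + (z - w) • M.R z (M.R w h) := by
  set u : M.A.domain := ⟨M.R w h, M.R_mem w hw h⟩ with hu
  have h1 : M.A u - w • (u : H) = h := M.R_right w hw h
  have h2 : h = (M.A u - z • (u : H)) + (z - w) • (u : H) := by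
    rw [← h1]; module
  calc M.R z h = M.R z ((M.A u - z • (u : H)) + (z - w) • (u : H)) := by rw [← h2]
    _ = M.R z (M.A u - z • (u : H)) + (z - w) • M.R z (u : H) := by
        rw [map_add, map_smul]
    _ = M.R w h + (z - w) • M.R z (M.R w h) := by rw [M.R_left z hz u]

/-- The resolvent identity for `Rs`. -/
lemma Rs_id (z w : ℂ) (hz : 0 < z.im) (hw : 0 < w.im) (h : H) :
    M.Rs z h = M.Rs w h + (z - w) • M.Rs z (M.Rs w h) := by
  set u : M.A.adjoint.domain := ⟨M.Rs w h, M.Rs_mem w hw h⟩ with hu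
  have h1 : M.A.adjoint u - w • (u : H) = h := M.Rs_right w hw h
  have h2 : h = (M.A.adjoint u - z • (u : H)) + (z - w) • (u : H) := by
    rw [← h1]; module
  calc M.Rs z h = M.Rs z ((M.A.adjoint u - z • (u : H)) + (z - w) • (u : H)) := by rw [← h2]
    _ = M.Rs z (M.A.adjoint u - z • (u : H)) + (z - w) • M.Rs z (u : H) := by
        rw [map_add, map_smul]
    _ = M.Rs w h + (z - w) • M.Rs z (M.Rs w h) := by rw [M.Rs_left z hz u]

/-- `(R z)* = Rs z̄`: the adjoint pairing of the resolvents. -/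
lemma R_Rs_adj (z : ℂ) (hz : z.im < 0) (x y : H) :
    ⟪M.R z x, y⟫ = ⟪x, M.Rs ((starRingEnd ℂ) z) y⟫ := by
  have hz' : 0 < ((starRingEnd ℂ) z).im := by
    simpa using hz
  set u : M.A.domain := ⟨M.R z x, M.R_mem z hz x⟩ with hu
  set v : M.A.adjoint.domain := ⟨M.Rs ((starRingEnd ℂ) z) y, M.Rs_mem _ hz' y⟩ with hv
  have h1 : M.A u - z • (u : H) = x := M.R_right z hz x
  have h2 : M.A.adjoint v - (starRingEnd ℂ) z • (v : H) = y := M.Rs_right _ hz' y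
  have key : ⟪(u : H), M.A.adjoint v⟫ = ⟪M.A u, (v : H)⟫ := by
    calc ⟪(u : H), M.A.adjoint v⟫ = (starRingEnd ℂ) ⟪M.A.adjoint v, (u : H)⟫ :=
          (inner_conj_symm _ _).symm
      _ = (starRingEnd ℂ) ⟪(v : H), M.A u⟫ := by rw [M.adj_pair v u]
      _ = ⟪M.A u, (v : H)⟫ := inner_conj_symm _ _
  calc ⟪M.R z x, y⟫ = ⟪(u : H), M.A.adjoint v - (starRingEnd ℂ) z • (v : H)⟫ := by rw [h2]
    _ = ⟪(u : H), M.A.adjoint v⟫ - (starRingEnd ℂ) z * ⟪(u : H), (v : H)⟫ := by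
        rw [inner_sub_right, inner_smul_right]
    _ = ⟪M.A u, (v : H)⟫ - (starRingEnd ℂ) z * ⟪(u : H), (v : H)⟫ := by rw [key]
    _ = ⟪M.A u - z • (u : H), (v : H)⟫ := by rw [inner_sub_left, inner_smul_left]
    _ = ⟪x, M.Rs ((starRingEnd ℂ) z) y⟫ := by rw [h1]

/-- The key defect formula: for `v ∈ D(A*)` and `Im μ < 0`,
`v = (A - μ)⁻¹ (A* - μ) v + i (Γ_* (A* - μ̄)⁻¹)* Γ_* v`. -/
lemma defect_star (μ : ℂ) (hμ : μ.im < 0) (v : M.A.adjoint.domain) :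
    (v : H) = M.R μ (M.A.adjoint v - μ • (v : H)) +
      Complex.I • (ContinuousLinearMap.adjoint (M.ΓsRs ((starRingEnd ℂ) μ))) (M.Γs v) := by
  have hμ' : 0 < ((starRingEnd ℂ) μ).im := by simpa using hμ
  apply ext_inner_right ℂ
  intro g
  set p : M.A.adjoint.domain := ⟨M.Rs ((starRingEnd ℂ) μ) g, M.Rs_mem _ hμ' g⟩ with hp
  have hg : M.A.adjoint p - (starRingEnd ℂ) μ • (p : H) = g := M.Rs_right _ hμ' g
  set u' : M.A.domain :=
    ⟨M.R μ (M.A.adjoint v - μ • (v : H)), M.R_mem μ hμ _⟩ with hu'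
  have hu'2 : M.A u' - μ • (u' : H) = M.A.adjoint v - μ • (v : H) := M.R_right μ hμ _
  have pair : ∀ w : M.A.domain, ⟪(w : H), M.A.adjoint p⟫ = ⟪M.A w, (p : H)⟫ := by
    intro w
    calc ⟪(w : H), M.A.adjoint p⟫ = (starRingEnd ℂ) ⟪M.A.adjoint p, (w : H)⟫ :=
          (inner_conj_symm _ _).symm
      _ = (starRingEnd ℂ) ⟪(p : H), M.A w⟫ := by rw [M.adj_pair p w]
      _ = ⟪M.A w, (p : H)⟫ := inner_conj_symm _ _
  have step1 : ⟪(u' : H), g⟫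
      = ⟪M.A.adjoint v, (p : H)⟫ - (starRingEnd ℂ) μ * ⟪(v : H), (p : H)⟫ := by
    calc ⟪(u' : H), g⟫ = ⟪(u' : H), M.A.adjoint p - (starRingEnd ℂ) μ • (p : H)⟫ := by
          rw [hg]
      _ = ⟪(u' : H), M.A.adjoint p⟫ - (starRingEnd ℂ) μ * ⟪(u' : H), (p : H)⟫ := by
          rw [inner_sub_right, inner_smul_right]
      _ = ⟪M.A u', (p : H)⟫ - (starRingEnd ℂ) μ * ⟪(u' : H), (p : H)⟫ := by rw [pair u']
      _ = ⟪M.A u' - μ • (u' : H), (p : H)⟫ := by rw [inner_sub_left, inner_smul_left]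
      _ = ⟪M.A.adjoint v - μ • (v : H), (p : H)⟫ := by rw [hu'2]
      _ = ⟪M.A.adjoint v, (p : H)⟫ - (starRingEnd ℂ) μ * ⟪(v : H), (p : H)⟫ := by
          rw [inner_sub_left, inner_smul_left]
  have step2 : ⟪(v : H), g⟫
      = ⟪(v : H), M.A.adjoint p⟫ - (starRingEnd ℂ) μ * ⟪(v : H), (p : H)⟫ := by
    rw [← hg, inner_sub_right, inner_smul_right]
  have step3 : ⟪(v : H), M.A.adjoint p⟫ - ⟪M.A.adjoint v, (p : H)⟫
      = -Complex.I * ⟪M.Γs v, M.Γs p⟫ := M.lagrange_star p v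
  have hΓp : M.Γs p = M.ΓsRs ((starRingEnd ℂ) μ) g := (M.ΓsRs_spec _ hμ' g).symm
  have hX : ⟪Complex.I • (ContinuousLinearMap.adjoint (M.ΓsRs ((starRingEnd ℂ) μ)))
      (M.Γs v), g⟫ = -Complex.I * ⟪M.Γs v, M.Γs p⟫ := by
    rw [inner_smul_left, ContinuousLinearMap.adjoint_inner_left, Complex.conj_I, hΓp,
      neg_mul]
  rw [inner_add_left, step1, hX, step2]
  linear_combination step3

/-- The dual defect formula: for `u ∈ D(A)` and `Im λ > 0`,
`u = (A* - λ)⁻¹ (A - λ) u - i (Γ (A - λ̄)⁻¹)* Γ u`. -/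
lemma defect (lam : ℂ) (hl : 0 < lam.im) (u : M.A.domain) :
    (u : H) = M.Rs lam (M.A u - lam • (u : H)) -
      Complex.I • (ContinuousLinearMap.adjoint (M.ΓR ((starRingEnd ℂ) lam))) (M.Γ u) := by
  have hl' : ((starRingEnd ℂ) lam).im < 0 := by simpa using hl
  apply ext_inner_right ℂ
  intro g
  set q : M.A.domain := ⟨M.R ((starRingEnd ℂ) lam) g, M.R_mem _ hl' g⟩ with hq
  have hg : M.A q - (starRingEnd ℂ) lam • (q : H) = g := M.R_right _ hl' g
  set p' : M.A.adjoint.domain :=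
    ⟨M.Rs lam (M.A u - lam • (u : H)), M.Rs_mem lam hl _⟩ with hp'
  have hp'2 : M.A.adjoint p' - lam • (p' : H) = M.A u - lam • (u : H) := M.Rs_right lam hl _
  have pair : ⟪(p' : H), M.A q⟫ = ⟪M.A.adjoint p', (q : H)⟫ := (M.adj_pair p' q).symm
  have step1 : ⟪(p' : H), g⟫
      = ⟪M.A u, (q : H)⟫ - (starRingEnd ℂ) lam * ⟪(u : H), (q : H)⟫ := by
    calc ⟪(p' : H), g⟫ = ⟪(p' : H), M.A q - (starRingEnd ℂ) lam • (q : H)⟫ := by rw [hg]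
      _ = ⟪(p' : H), M.A q⟫ - (starRingEnd ℂ) lam * ⟪(p' : H), (q : H)⟫ := by
          rw [inner_sub_right, inner_smul_right]
      _ = ⟪M.A.adjoint p', (q : H)⟫ - (starRingEnd ℂ) lam * ⟪(p' : H), (q : H)⟫ := by
          rw [pair]
      _ = ⟪M.A.adjoint p' - lam • (p' : H), (q : H)⟫ := by
          rw [inner_sub_left, inner_smul_left]
      _ = ⟪M.A u - lam • (u : H), (q : H)⟫ := by rw [hp'2]
      _ = ⟪M.A u, (q : H)⟫ - (starRingEnd ℂ) lam * ⟪(u : H), (q : H)⟫ := by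
          rw [inner_sub_left, inner_smul_left]
  have step2 : ⟪(u : H), g⟫
      = ⟪(u : H), M.A q⟫ - (starRingEnd ℂ) lam * ⟪(u : H), (q : H)⟫ := by
    rw [← hg, inner_sub_right, inner_smul_right]
  have step3 : ⟪(u : H), M.A q⟫ - ⟪M.A u, (q : H)⟫
      = Complex.I * ⟪M.Γ u, M.Γ q⟫ := M.lagrange q u
  have hΓq : M.Γ q = M.ΓR ((starRingEnd ℂ) lam) g := (M.ΓR_spec _ hl' g).symm
  have hX : ⟪Complex.I • (ContinuousLinearMap.adjoint (M.ΓR ((starRingEnd ℂ) lam)))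
      (M.Γ u), g⟫ = -Complex.I * ⟪M.Γ u, M.Γ q⟫ := by
    rw [inner_smul_left, ContinuousLinearMap.adjoint_inner_left, Complex.conj_I, hΓq,
      neg_mul]
  rw [inner_sub_left, step1, hX, step2]
  linear_combination step3

lemma cns_closed (l1 l2 : ℂ) : IsClosed ((M.cnsSubspace l1 l2 : Submodule ℂ H) : Set H) :=
  Submodule.isClosed_topologicalClosure _

lemma gen_R_mem {mu : ℂ} {x : H} (hmu : mu.im < 0) (hx : x ∈ M.MSet Complex.I Complex.I) :
    M.R mu x ∈ M.cnsSubspace Complex.I Complex.I := by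
  apply Submodule.le_topologicalClosure
  exact Submodule.subset_span (Or.inl ⟨mu, x, hmu, hx, rfl⟩)

lemma gen_Rs_mem {lam : ℂ} {x : H} (hlam : 0 < lam.im)
    (hx : x ∈ M.MSet Complex.I Complex.I) :
    M.Rs lam x ∈ M.cnsSubspace Complex.I Complex.I := by
  apply Submodule.le_topologicalClosure
  exact Submodule.subset_span (Or.inr ⟨lam, x, hlam, hx, rfl⟩)

lemma zn_im (n : ℕ) : ((-(((n : ℝ) + 1) : ℂ) * Complex.I)).im = -(((n : ℝ) + 1)) := by
  simp

lemma zn_im_neg (n : ℕ) : ((-(((n : ℝ) + 1) : ℂ) * Complex.I)).im < 0 := by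
  rw [zn_im]
  have : (0:ℝ) ≤ (n:ℝ) := Nat.cast_nonneg n
  linarith

/-- The strong convergence `it (A + it)⁻¹ x → x` as `t → ∞`, along `t = n + 1`. -/
lemma tendsto_R_id (x : H) :
    Filter.Tendsto
      (fun n : ℕ => ((((n : ℝ) + 1) : ℂ) * Complex.I) •
        M.R (-(((n : ℝ) + 1) : ℂ) * Complex.I) x) Filter.atTop (nhds x) := by
  rw [Metric.tendsto_atTop]
  intro ε hε
  -- choose u in the domain close to x
  obtain ⟨y, hy, hyx⟩ : ∃ y ∈ (M.A.domain : Set H), dist x y < ε / 3 := by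
    have := M.dense_dom x
    exact Metric.mem_closure_iff.mp this (ε / 3) (by linarith)
  set u : M.A.domain := ⟨y, hy⟩ with hu
  -- choose N with ‖A u‖ / (N+1) < ε/3
  obtain ⟨N, hN⟩ := exists_nat_gt (‖M.A u‖ * 3 / ε)
  refine ⟨N, fun n hn => ?_⟩
  set z : ℂ := -(((n : ℝ) + 1) : ℂ) * Complex.I with hz
  have hzim : z.im < 0 := zn_im_neg n
  have hnorm : ∀ w : H, ‖M.R z w‖ ≤ ‖w‖ / ((n : ℝ) + 1) := by
    intro w
    have := M.R_norm_le z hzim w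
    rwa [zn_im, neg_neg] at this
  have hmid : ((((n : ℝ) + 1) : ℂ) * Complex.I) • M.R z (u : H) - (u : H)
      = -(M.R z (M.A u)) := by
    have h1 : M.R z (M.A u - z • (u : H)) = (u : H) := M.R_left z hzim u
    rw [map_sub, map_smul] at h1
    have h2 : M.R z (M.A u) - z • M.R z (u : H) = (u : H) := h1
    have hzz : -z = (((n : ℝ) + 1) : ℂ) * Complex.I := by rw [hz]; push_cast; ring
    rw [← hzz]
    linear_combination (norm := module) h2
  have key : (((((n : ℝ) + 1) : ℂ) * Complex.I) • M.R z x - x)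
      = ((((n : ℝ) + 1) : ℂ) * Complex.I) • M.R z (x - (u : H))
        + (-(M.R z (M.A u))) + ((u : H) - x) := by
    rw [← hmid, map_sub]
    module
  have hsc : ‖(((n : ℝ) + 1) : ℂ) * Complex.I‖ = (n : ℝ) + 1 := by
    rw [norm_mul, Complex.norm_I, mul_one]
    have h : ((((n : ℝ) + 1) : ℂ)) = Complex.ofReal ((n : ℝ) + 1) := by push_cast; ring
    rw [h, Complex.norm_real, Real.norm_eq_abs]
    exact abs_of_nonneg (by positivity)
  rw [dist_eq_norm, key]
  have b1 : ‖((((n : ℝ) + 1) : ℂ) * Complex.I) • M.R z (x - (u : H))‖ ≤ ‖x - (u : H)‖ := by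
    rw [norm_smul, hsc]
    have := hnorm (x - (u : H))
    have hpos : (0 : ℝ) < (n : ℝ) + 1 := by positivity
    calc ((n : ℝ) + 1) * ‖M.R z (x - (u : H))‖ ≤ ((n : ℝ) + 1) * (‖x - (u : H)‖ / ((n : ℝ) + 1)) := by
          exact mul_le_mul_of_nonneg_left this (by positivity)
      _ = ‖x - (u : H)‖ := by field_simp
  have b2 : ‖-(M.R z (M.A u))‖ ≤ ‖M.A u‖ / ((n : ℝ) + 1) := by
    rw [norm_neg]; exact hnorm _
  have b3 : ‖M.A u‖ / ((n : ℝ) + 1) < ε / 3 := by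
    rw [div_lt_iff₀ (by positivity : (0 : ℝ) < (n : ℝ) + 1)]
    have hNn : (N : ℝ) ≤ (n : ℝ) := Nat.cast_le.mpr hn
    have : ‖M.A u‖ * 3 / ε < (n : ℝ) + 1 := by linarith
    rw [div_lt_iff₀ hε] at this
    nlinarith
  have hxy : ‖x - (u : H)‖ < ε / 3 := by
    rw [← dist_eq_norm]; exact hyx
  calc ‖((((n : ℝ) + 1) : ℂ) * Complex.I) • M.R z (x - (u : H))
        + (-(M.R z (M.A u))) + ((u : H) - x)‖
      ≤ ‖((((n : ℝ) + 1) : ℂ) * Complex.I) • M.R z (x - (u : H))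
        + (-(M.R z (M.A u)))‖ + ‖(u : H) - x‖ := norm_add_le _ _
    _ ≤ ‖((((n : ℝ) + 1) : ℂ) * Complex.I) • M.R z (x - (u : H))‖
        + ‖-(M.R z (M.A u))‖ + ‖(u : H) - x‖ := by
        have := norm_add_le (((((n : ℝ) + 1) : ℂ) * Complex.I) • M.R z (x - (u : H)))
          (-(M.R z (M.A u)))
        linarith
    _ < ε / 3 + ε / 3 + ε / 3 := by
        have h4 : ‖(u : H) - x‖ = ‖x - (u : H)‖ := norm_sub_rev _ _
        have := b1.trans_lt hxy
        have := b2.trans_lt b3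
        rw [h4]
        linarith
    _ = ε := by ring

/-- Every element of `M` lies in `H_cns`. -/
lemma MSet_subset_cns {x : H} (hx : x ∈ M.MSet Complex.I Complex.I) :
    x ∈ M.cnsSubspace Complex.I Complex.I := by
  have hcl := M.cns_closed Complex.I Complex.I
  refine hcl.mem_of_tendsto (M.tendsto_R_id x) ?_
  filter_upwards with n
  exact Submodule.smul_mem _ _ (M.gen_R_mem (zn_im_neg n) hx)

/-- If a bounded operator maps a spanning set into a closed submodule, it maps the closed
span into it. -/
lemma clm_mem_of_span_closure {T : H →L[ℂ] H} {S : Set H} {K : Submodule ℂ H}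
    (hK : IsClosed (K : Set H)) (hS : ∀ y ∈ S, T y ∈ K) {x : H}
    (hx : x ∈ (Submodule.span ℂ S).topologicalClosure) : T x ∈ K := by
  have h1 : Submodule.span ℂ S ≤ K.comap (T : H →ₗ[ℂ] H) :=
    Submodule.span_le.mpr fun y hy => hS y hy
  have h2 : IsClosed ((K.comap (T : H →ₗ[ℂ] H) : Submodule ℂ H) : Set H) :=
    hK.preimage T.continuous
  exact Submodule.topologicalClosure_minimal _ h1 h2 hx

lemma conj_neg_I : (starRingEnd ℂ) (-Complex.I) = Complex.I := by
  rw [map_neg, Complex.conj_I, neg_neg]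

/-- `H_cns` is invariant under `R (-i)`. -/
lemma cns_R_base {h : H} (hh : h ∈ M.cnsSubspace Complex.I Complex.I) :
    M.R (-Complex.I) h ∈ M.cnsSubspace Complex.I Complex.I := by
  have hIm : (-Complex.I).im < 0 := by simp
  refine clm_mem_of_span_closure (M.cns_closed Complex.I Complex.I) ?_ hh
  rintro y (⟨mu, x, hmu, hx, rfl⟩ | ⟨lam, x, hlam, hx, rfl⟩)
  · -- y = R mu x
    have hstep : ∀ mu' : ℂ, mu'.im < 0 → mu' ≠ -Complex.I →
        M.R (-Complex.I) (M.R mu' x) ∈ M.cnsSubspace Complex.I Complex.I := by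
      intro mu' hmu' hne
      have hid := M.R_id (-Complex.I) mu' hIm hmu' x
      have hc : (-Complex.I - mu') ≠ 0 := by
        intro hcon
        apply hne
        have : mu' = -Complex.I := by linear_combination -hcon
        exact this.symm ▸ rfl
      have : M.R (-Complex.I) (M.R mu' x)
          = (-Complex.I - mu')⁻¹ • (M.R (-Complex.I) x - M.R mu' x) := by
        rw [eq_inv_smul_iff₀ hc]
        linear_combination (norm := module) -hid
      rw [this]
      exact Submodule.smul_mem _ _ (Submodule.sub_mem _ (M.gen_R_mem hIm hx)
        (M.gen_R_mem hmu' hx))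
    rcases eq_or_ne mu (-Complex.I) with rfl | hne
    · -- the limit case
      set b := M.R (-Complex.I) (M.R (-Complex.I) x) with hb
      set c : ℕ → ℂ := fun n => -(((1 + (1 : ℝ) / (n + 1)) : ℝ) : ℂ) * Complex.I with hc
      set a : ℕ → H := fun n => M.R (-Complex.I) (M.R (c n) x) with ha
      have him : ∀ n : ℕ, (c n).im = -(1 + (1 : ℝ) / (n + 1)) := by
        intro n
        rw [hc]
        simp only [Complex.mul_im, Complex.I_re, Complex.I_im, Complex.neg_re,
          Complex.neg_im, Complex.ofReal_re, Complex.ofReal_im]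
        ring
      have himlt : ∀ n : ℕ, (c n).im < 0 := by
        intro n; rw [him n]
        have : (0:ℝ) < 1 / ((n:ℝ) + 1) := by positivity
        linarith
      have hne' : ∀ n : ℕ, c n ≠ -Complex.I := by
        intro n hcon
        have h0 := congrArg Complex.im hcon
        rw [him n] at h0
        simp at h0
        have : (0:ℝ) < 1 / ((n:ℝ) + 1) := by positivity
        linarith
      have hmem : ∀ n, a n ∈ M.cnsSubspace Complex.I Complex.I := fun n =>
        hstep _ (himlt n) (hne' n)
      have htend : Filter.Tendsto a Filter.atTop (nhds b) := by
        rw [tendsto_iff_norm_sub_tendsto_zero]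
        have hbound : ∀ n : ℕ, ‖a n - b‖ ≤ ‖M.R (-Complex.I) x‖ / (n + 1) := by
          intro n
          have h2 : M.R (c n) x - M.R (-Complex.I) x
              = (c n + Complex.I) • M.R (c n) (M.R (-Complex.I) x) := by
            have := M.R_id (c n) (-Complex.I) (himlt n) hIm x
            linear_combination (norm := module) this
          have h3 : ‖a n - b‖ ≤ ‖M.R (c n) x - M.R (-Complex.I) x‖ := by
            have h4 : a n - b = M.R (-Complex.I) (M.R (c n) x - M.R (-Complex.I) x) := by
              rw [ha, hb, map_sub]
            rw [h4]
            have := M.R_norm_le (-Complex.I) hIm (M.R (c n) x - M.R (-Complex.I) x)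
            simpa using this
          have h5 : ‖(c n + Complex.I)‖ = 1 / ((n:ℝ) + 1) := by
            have he : c n + Complex.I = Complex.ofReal ((1:ℝ) / (n + 1)) * (-Complex.I) := by
              rw [hc]
              push_cast
              ring
            rw [he, norm_mul, norm_neg, Complex.norm_I, mul_one, Complex.norm_real,
              Real.norm_eq_abs]
            exact abs_of_nonneg (by positivity)
          have h6 : ‖M.R (c n) (M.R (-Complex.I) x)‖ ≤ ‖M.R (-Complex.I) x‖ := by
            have hle := M.R_norm_le (c n) (himlt n) (M.R (-Complex.I) x)
            rw [him n] at hle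
            have h7 : (0:ℝ) < 1 / ((n:ℝ)+1) := by positivity
            have h8 : ‖M.R (-Complex.I) x‖ / (1 + 1 / ((n:ℝ) + 1)) ≤ ‖M.R (-Complex.I) x‖ := by
              rw [div_le_iff₀ (by linarith)]
              nlinarith [norm_nonneg (M.R (-Complex.I) x)]
            calc ‖M.R (c n) (M.R (-Complex.I) x)‖
                ≤ ‖M.R (-Complex.I) x‖ / - -(1 + 1/((n:ℝ)+1)) := by simpa using hle
              _ = ‖M.R (-Complex.I) x‖ / (1 + 1/((n:ℝ)+1)) := by norm_num
              _ ≤ ‖M.R (-Complex.I) x‖ := h8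
          calc ‖a n - b‖ ≤ ‖M.R (c n) x - M.R (-Complex.I) x‖ := h3
            _ = ‖c n + Complex.I‖ * ‖M.R (c n) (M.R (-Complex.I) x)‖ := by
                rw [h2, norm_smul]
            _ ≤ (1 / ((n:ℝ) + 1)) * ‖M.R (-Complex.I) x‖ := by
                rw [h5]
                exact mul_le_mul_of_nonneg_left h6 (by positivity)
            _ = ‖M.R (-Complex.I) x‖ / (n + 1) := by ring
        have hzero : Filter.Tendsto (fun n : ℕ => ‖M.R (-Complex.I) x‖ / ((n:ℝ) + 1))
            Filter.atTop (nhds 0) := by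
          apply Filter.Tendsto.div_atTop tendsto_const_nhds
          exact Filter.tendsto_atTop_add_const_right _ _ tendsto_natCast_atTop_atTop
        exact squeeze_zero (fun n => norm_nonneg _) hbound hzero
      exact (M.cns_closed Complex.I Complex.I).mem_of_tendsto htend
        (Filter.Eventually.of_forall hmem)
    · exact hstep mu hmu hne
  · -- y = Rs lam x
    set v : M.A.adjoint.domain := ⟨M.Rs lam x, M.Rs_mem lam hlam x⟩ with hv
    have hdef := M.defect_star (-Complex.I) hIm v
    rw [conj_neg_I] at hdef
    have hAv : M.A.adjoint v - lam • (v : H) = x := M.Rs_right lam hlam x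
    have hΓv : M.Γs v = M.ΓsRs lam x := (M.ΓsRs_spec lam hlam x).symm
    have hcoef : lam + Complex.I ≠ 0 := by
      intro hcon
      have := congrArg Complex.im hcon
      simp at this
      linarith
    have harg : M.A.adjoint v - (-Complex.I) • (v : H)
        = x + (lam + Complex.I) • (v : H) := by
      linear_combination (norm := module) hAv
    have hmain : M.R (-Complex.I) ((v : H))
        = (lam + Complex.I)⁻¹ • ((v : H) - M.R (-Complex.I) x
            - Complex.I • (ContinuousLinearMap.adjoint (M.ΓsRs Complex.I))
              (M.ΓsRs lam x)) := by
      rw [eq_inv_smul_iff₀ hcoef]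
      rw [harg, map_add, map_smul] at hdef
      rw [← hΓv]
      linear_combination (norm := module) -hdef
    have hvK : (v : H) ∈ M.cnsSubspace Complex.I Complex.I := M.gen_Rs_mem hlam hx
    have hMK : (ContinuousLinearMap.adjoint (M.ΓsRs Complex.I)) (M.ΓsRs lam x)
        ∈ M.cnsSubspace Complex.I Complex.I :=
      M.MSet_subset_cns (Or.inr ⟨M.ΓsRs lam x, rfl⟩)
    rw [show M.R (-Complex.I) (M.Rs lam x) = M.R (-Complex.I) ((v : H)) from rfl, hmain]
    exact Submodule.smul_mem _ _ (Submodule.sub_mem _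
      (Submodule.sub_mem _ hvK (M.gen_R_mem hIm hx)) (Submodule.smul_mem _ _ hMK))

/-- `H_cns` is invariant under `Rs i`. -/
lemma cns_Rs_base {h : H} (hh : h ∈ M.cnsSubspace Complex.I Complex.I) :
    M.Rs Complex.I h ∈ M.cnsSubspace Complex.I Complex.I := by
  have hIm : (0:ℝ) < (Complex.I).im := by simp
  refine clm_mem_of_span_closure (M.cns_closed Complex.I Complex.I) ?_ hh
  rintro y (⟨mu, x, hmu, hx, rfl⟩ | ⟨lam, x, hlam, hx, rfl⟩)
  · -- y = R mu x : use the defect formula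
    set u : M.A.domain := ⟨M.R mu x, M.R_mem mu hmu x⟩ with hu
    have hdef := M.defect Complex.I hIm u
    rw [Complex.conj_I] at hdef
    have hAu : M.A u - mu • (u : H) = x := M.R_right mu hmu x
    have hΓu : M.Γ u = M.ΓR mu x := (M.ΓR_spec mu hmu x).symm
    have hcoef : mu - Complex.I ≠ 0 := by
      intro hcon
      have := congrArg Complex.im hcon
      simp at this
      linarith
    have harg : M.A u - Complex.I • (u : H) = x + (mu - Complex.I) • (u : H) := by
      linear_combination (norm := module) hAu
    have hmain : M.Rs Complex.I ((u : H))
        = (mu - Complex.I)⁻¹ • ((u : H) - M.Rs Complex.I x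
            + Complex.I • (ContinuousLinearMap.adjoint (M.ΓR (-Complex.I)))
              (M.ΓR mu x)) := by
      rw [eq_inv_smul_iff₀ hcoef]
      rw [harg, map_add, map_smul] at hdef
      rw [← hΓu]
      linear_combination (norm := module) -hdef
    have huK : (u : H) ∈ M.cnsSubspace Complex.I Complex.I := M.gen_R_mem hmu hx
    have hMK : (ContinuousLinearMap.adjoint (M.ΓR (-Complex.I))) (M.ΓR mu x)
        ∈ M.cnsSubspace Complex.I Complex.I :=
      M.MSet_subset_cns (Or.inl ⟨M.ΓR mu x, rfl⟩)
    rw [show M.Rs Complex.I (M.R mu x) = M.Rs Complex.I ((u : H)) from rfl, hmain]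
    exact Submodule.smul_mem _ _ (Submodule.add_mem _
      (Submodule.sub_mem _ huK (M.gen_Rs_mem hIm hx)) (Submodule.smul_mem _ _ hMK))
  · -- y = Rs lam x
    have hstep : ∀ lam' : ℂ, 0 < lam'.im → lam' ≠ Complex.I →
        M.Rs Complex.I (M.Rs lam' x) ∈ M.cnsSubspace Complex.I Complex.I := by
      intro lam' hlam' hne
      have hid := M.Rs_id Complex.I lam' hIm hlam' x
      have hcc : (Complex.I - lam') ≠ 0 := by
        intro hcon
        apply hne
        have : lam' = Complex.I := by linear_combination -hcon
        exact this.symm ▸ rfl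
      have : M.Rs Complex.I (M.Rs lam' x)
          = (Complex.I - lam')⁻¹ • (M.Rs Complex.I x - M.Rs lam' x) := by
        rw [eq_inv_smul_iff₀ hcc]
        linear_combination (norm := module) -hid
      rw [this]
      exact Submodule.smul_mem _ _ (Submodule.sub_mem _ (M.gen_Rs_mem hIm hx)
        (M.gen_Rs_mem hlam' hx))
    rcases eq_or_ne lam Complex.I with rfl | hne
    · -- the limit case
      set b := M.Rs Complex.I (M.Rs Complex.I x) with hb
      set c : ℕ → ℂ := fun n => (((1 + (1 : ℝ) / (n + 1)) : ℝ) : ℂ) * Complex.I with hc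
      set a : ℕ → H := fun n => M.Rs Complex.I (M.Rs (c n) x) with ha
      have him : ∀ n : ℕ, (c n).im = 1 + (1 : ℝ) / (n + 1) := by
        intro n
        rw [hc]
        simp only [Complex.mul_im, Complex.I_re, Complex.I_im, Complex.ofReal_re,
          Complex.ofReal_im]
        ring
      have himlt : ∀ n : ℕ, 0 < (c n).im := by
        intro n; rw [him n]
        have : (0:ℝ) < 1 / ((n:ℝ) + 1) := by positivity
        linarith
      have hne' : ∀ n : ℕ, c n ≠ Complex.I := by
        intro n hcon
        have h0 := congrArg Complex.im hcon
        rw [him n] at h0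
        simp at h0
        have : (0:ℝ) < 1 / ((n:ℝ) + 1) := by positivity
        linarith
      have hmem : ∀ n, a n ∈ M.cnsSubspace Complex.I Complex.I := fun n =>
        hstep _ (himlt n) (hne' n)
      have htend : Filter.Tendsto a Filter.atTop (nhds b) := by
        rw [tendsto_iff_norm_sub_tendsto_zero]
        have hbound : ∀ n : ℕ, ‖a n - b‖ ≤ ‖M.Rs Complex.I x‖ / (n + 1) := by
          intro n
          have h2 : M.Rs (c n) x - M.Rs Complex.I x
              = (c n - Complex.I) • M.Rs (c n) (M.Rs Complex.I x) := by
            have := M.Rs_id (c n) Complex.I (himlt n) hIm x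
            linear_combination (norm := module) this
          have h3 : ‖a n - b‖ ≤ ‖M.Rs (c n) x - M.Rs Complex.I x‖ := by
            have h4 : a n - b = M.Rs Complex.I (M.Rs (c n) x - M.Rs Complex.I x) := by
              rw [ha, hb, map_sub]
            rw [h4]
            have := M.Rs_norm_le Complex.I hIm (M.Rs (c n) x - M.Rs Complex.I x)
            simpa using this
          have h5 : ‖(c n - Complex.I)‖ = 1 / ((n:ℝ) + 1) := by
            have he : c n - Complex.I = Complex.ofReal ((1:ℝ) / (n + 1)) * Complex.I := by
              rw [hc]
              push_cast
              ring
            rw [he, norm_mul, Complex.norm_I, mul_one, Complex.norm_real,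
              Real.norm_eq_abs]
            exact abs_of_nonneg (by positivity)
          have h6 : ‖M.Rs (c n) (M.Rs Complex.I x)‖ ≤ ‖M.Rs Complex.I x‖ := by
            have hle := M.Rs_norm_le (c n) (himlt n) (M.Rs Complex.I x)
            rw [him n] at hle
            have h7 : (0:ℝ) < 1 / ((n:ℝ)+1) := by positivity
            have h8 : ‖M.Rs Complex.I x‖ / (1 + 1 / ((n:ℝ) + 1)) ≤ ‖M.Rs Complex.I x‖ := by
              rw [div_le_iff₀ (by linarith)]
              nlinarith [norm_nonneg (M.Rs Complex.I x)]
            exact hle.trans h8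
          calc ‖a n - b‖ ≤ ‖M.Rs (c n) x - M.Rs Complex.I x‖ := h3
            _ = ‖c n - Complex.I‖ * ‖M.Rs (c n) (M.Rs Complex.I x)‖ := by
                rw [h2, norm_smul]
            _ ≤ (1 / ((n:ℝ) + 1)) * ‖M.Rs Complex.I x‖ := by
                rw [h5]
                exact mul_le_mul_of_nonneg_left h6 (by positivity)
            _ = ‖M.Rs Complex.I x‖ / (n + 1) := by ring
        have hzero : Filter.Tendsto (fun n : ℕ => ‖M.Rs Complex.I x‖ / ((n:ℝ) + 1))
            Filter.atTop (nhds 0) := by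
          apply Filter.Tendsto.div_atTop tendsto_const_nhds
          exact Filter.tendsto_atTop_add_const_right _ _ tendsto_natCast_atTop_atTop
        exact squeeze_zero (fun n => norm_nonneg _) hbound hzero
      exact (M.cns_closed Complex.I Complex.I).mem_of_tendsto htend
        (Filter.Eventually.of_forall hmem)
    · exact hstep lam hlam hne

/-- `H_sa = H_cnsᗮ` is invariant under `R (-i)`. -/
lemma sa_R_base {h : H} (hh : h ∈ (M.cnsSubspace Complex.I Complex.I)ᗮ) :
    M.R (-Complex.I) h ∈ (M.cnsSubspace Complex.I Complex.I)ᗮ := by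
  rw [Submodule.mem_orthogonal]
  intro u hu
  have h1 : ⟪u, M.R (-Complex.I) h⟫ = (starRingEnd ℂ) ⟪M.R (-Complex.I) h, u⟫ :=
    (inner_conj_symm _ _).symm
  have h2 : ⟪M.R (-Complex.I) h, u⟫ = ⟪h, M.Rs Complex.I u⟫ := by
    have := M.R_Rs_adj (-Complex.I) (by simp) h u
    rwa [conj_neg_I] at this
  have h3 : ⟪h, M.Rs Complex.I u⟫ = (starRingEnd ℂ) ⟪M.Rs Complex.I u, h⟫ :=
    (inner_conj_symm _ _).symm
  have h4 : ⟪M.Rs Complex.I u, h⟫ = 0 :=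
    (Submodule.mem_orthogonal _ h).mp hh _ (M.cns_Rs_base hu)
  rw [h1, h2, h3, h4]
  simp

/-- `H_sa = H_cnsᗮ` is invariant under `Rs i`. -/
lemma sa_Rs_base {h : H} (hh : h ∈ (M.cnsSubspace Complex.I Complex.I)ᗮ) :
    M.Rs Complex.I h ∈ (M.cnsSubspace Complex.I Complex.I)ᗮ := by
  rw [Submodule.mem_orthogonal]
  intro u hu
  have h2 : ⟪M.R (-Complex.I) u, h⟫ = ⟪u, M.Rs Complex.I h⟫ := by
    have := M.R_Rs_adj (-Complex.I) (by simp) u h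
    rwa [conj_neg_I] at this
  rw [← h2]
  exact (Submodule.mem_orthogonal _ h).mp hh _ (M.cns_R_base hu)

end StrausSetting
section OrthProj

lemma exists_isOrthProjOn (K : Submodule ℂ H) (hK : IsClosed (K : Set H)) :
    ∃ P : H →L[ℂ] H, IsOrthProjOn K P := by
  haveI : CompleteSpace K := hK.completeSpace_coe
  refine ⟨K.subtypeL.comp K.orthogonalProjectionOnto, ?_, ?_, ?_⟩
  · intro x
    exact (K.orthogonalProjectionOnto x).2
  · intro x hx
    simp only [ContinuousLinearMap.comp_apply, Submodule.subtypeL_apply]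
    exact Submodule.starProjection_eq_self_iff.mpr hx
  · intro x
    exact K.sub_starProjection_mem_orthogonal x

lemma IsOrthProjOn.eq_zero_of_orth {K : Submodule ℂ H} {P : H →L[ℂ] H}
    (h : IsOrthProjOn K P) {x : H} (hx : x ∈ Kᗮ) : P x = 0 := by
  have h1 : P x ∈ Kᗮ := by
    have := Kᗮ.sub_mem hx (h.sub_mem_orth x)
    simpa using this
  have h2 : (⟪P x, P x⟫ : ℂ) = 0 := (Submodule.mem_orthogonal _ _).mp h1 _ (h.mem x)
  exact inner_self_eq_zero.mp h2

lemma IsOrthProjOn.compl {K : Submodule ℂ H} {P : H →L[ℂ] H} (h : IsOrthProjOn K P) :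
    IsOrthProjOn Kᗮ (1 - P) := by
  refine ⟨?_, ?_, ?_⟩
  · intro x
    simpa using h.sub_mem_orth x
  · intro x hx
    simp [h.eq_zero_of_orth hx]
  · intro x
    have : x - (1 - P) x = P x := by simp
    rw [this]
    exact Submodule.le_orthogonal_orthogonal K (h.mem x)

lemma IsOrthProjOn.commute {K : Submodule ℂ H} {P : H →L[ℂ] H} (h : IsOrthProjOn K P)
    {T : H →L[ℂ] H} (hK : ∀ x ∈ K, T x ∈ K) (hKo : ∀ x ∈ Kᗮ, T x ∈ Kᗮ) (x : H) :
    P (T x) = T (P x) := by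
  have hdec : T x = T (P x) + T (x - P x) := by rw [← map_add]; congr 1; abel
  rw [hdec, map_add, h.id_of_mem _ (hK _ (h.mem x)),
    h.eq_zero_of_orth (hKo _ (h.sub_mem_orth x)), add_zero]

end OrthProj

namespace StrausSetting

variable (M : StrausSetting H E Es)

lemma himI : ((-Complex.I : ℂ)).im < 0 := by simp

/-- Statement (i), first half: `H_cns` is invariant for `A`. -/
lemma cns_invariant : PMapInvariant M.A (M.cnsSubspace Complex.I Complex.I) := by
  obtain ⟨P, hP⟩ := exists_isOrthProjOn _ (M.cns_closed Complex.I Complex.I)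
  refine ⟨P, hP, fun u => ?_⟩
  set f := M.A u + Complex.I • (u : H) with hfdef
  have harg : M.A u - (-Complex.I) • (u : H) = f := by rw [hfdef]; module
  have hf : M.R (-Complex.I) f = (u : H) := by
    rw [← harg]; exact M.R_left (-Complex.I) himI u
  have hcom : P (u : H) = M.R (-Complex.I) (P f) := by
    rw [← hf]
    exact hP.commute (fun x hx => M.cns_R_base hx) (fun x hx => M.sa_R_base hx) f
  have hmem : P (u : H) ∈ M.A.domain := hcom ▸ M.R_mem (-Complex.I) himI (P f)
  refine ⟨hmem, ?_⟩
  have h1 : (⟨P (u : H), hmem⟩ : M.A.domain)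
      = ⟨M.R (-Complex.I) (P f), M.R_mem _ himI _⟩ := Subtype.ext hcom
  have hval : M.A ⟨P (u : H), hmem⟩ = P f - Complex.I • M.R (-Complex.I) (P f) := by
    rw [h1]
    have h2 := M.R_right (-Complex.I) himI (P f)
    linear_combination (norm := module) h2
  rw [hval]
  exact Submodule.sub_mem _ (hP.mem f) (Submodule.smul_mem _ _ (M.cns_R_base (hP.mem f)))

/-- Statement (i), second half: `H_sa` is invariant for `A`. -/
lemma sa_invariant : PMapInvariant M.A (M.cnsSubspace Complex.I Complex.I)ᗮ := by
  obtain ⟨P, hP⟩ := exists_isOrthProjOn _ (M.cns_closed Complex.I Complex.I)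
  refine ⟨1 - P, hP.compl, fun u => ?_⟩
  set f := M.A u + Complex.I • (u : H) with hfdef
  have harg : M.A u - (-Complex.I) • (u : H) = f := by rw [hfdef]; module
  have hf : M.R (-Complex.I) f = (u : H) := by
    rw [← harg]; exact M.R_left (-Complex.I) himI u
  have hcomP : P (M.R (-Complex.I) f) = M.R (-Complex.I) (P f) :=
    hP.commute (fun x hx => M.cns_R_base hx) (fun x hx => M.sa_R_base hx) f
  have hcom : (1 - P) (u : H) = M.R (-Complex.I) ((1 - P) f) := by
    simp only [ContinuousLinearMap.sub_apply, ContinuousLinearMap.one_apply]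
    rw [← hf, hcomP, ← map_sub]
  have hmem : (1 - P) (u : H) ∈ M.A.domain := hcom ▸ M.R_mem (-Complex.I) himI _
  refine ⟨hmem, ?_⟩
  have h1 : (⟨(1 - P) (u : H), hmem⟩ : M.A.domain)
      = ⟨M.R (-Complex.I) ((1 - P) f), M.R_mem _ himI _⟩ := Subtype.ext hcom
  have hval : M.A ⟨(1 - P) (u : H), hmem⟩
      = (1 - P) f - Complex.I • M.R (-Complex.I) ((1 - P) f) := by
    rw [h1]
    have h2 := M.R_right (-Complex.I) himI ((1 - P) f)
    linear_combination (norm := module) h2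
  rw [hval]
  exact Submodule.sub_mem _ (hP.compl.mem f)
    (Submodule.smul_mem _ _ (M.sa_R_base (hP.compl.mem f)))


lemma R_inj (z : ℂ) (hz : z.im < 0) {a b : H} (hab : M.R z a = M.R z b) : a = b := by
  have h1 := M.R_right z hz a
  have h2 := M.R_right z hz b
  have h3 : (⟨M.R z a, M.R_mem z hz a⟩ : M.A.domain) = ⟨M.R z b, M.R_mem z hz b⟩ :=
    Subtype.ext hab
  rw [h3] at h1
  calc a = M.A ⟨M.R z b, M.R_mem z hz b⟩ - z • M.R z a := h1.symm
    _ = M.A ⟨M.R z b, M.R_mem z hz b⟩ - z • M.R z b := by rw [hab]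
    _ = b := h2

/-- `A` maps `D(A) ∩ H_sa` into `H_sa`. -/
lemma sa_A_mem {u : M.A.domain} (hu : (u : H) ∈ (M.cnsSubspace Complex.I Complex.I)ᗮ) :
    M.A u ∈ (M.cnsSubspace Complex.I Complex.I)ᗮ := by
  obtain ⟨P, hP⟩ := exists_isOrthProjOn _ (M.cns_closed Complex.I Complex.I)
  set f := M.A u + Complex.I • (u : H) with hfdef
  have harg : M.A u - (-Complex.I) • (u : H) = f := by rw [hfdef]; module
  have hf : M.R (-Complex.I) f = (u : H) := by
    rw [← harg]; exact M.R_left (-Complex.I) himI u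
  have hcomP : P (M.R (-Complex.I) f) = M.R (-Complex.I) (P f) :=
    hP.commute (fun x hx => M.cns_R_base hx) (fun x hx => M.sa_R_base hx) f
  have hPu : P (u : H) = 0 := hP.eq_zero_of_orth hu
  have h0 : M.R (-Complex.I) (P f) = 0 := by rw [← hcomP, hf, hPu]
  have hR0 : M.R (-Complex.I) (0 : H) = (0 : H) := map_zero _
  have hPf : P f = 0 := M.R_inj (-Complex.I) himI (h0.trans hR0.symm)
  have hforth : f ∈ (M.cnsSubspace Complex.I Complex.I)ᗮ := by
    have := hP.sub_mem_orth f
    rwa [hPf, sub_zero] at this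
  have : M.A u = f - Complex.I • (u : H) := by rw [hfdef]; module
  rw [this]
  exact Submodule.sub_mem _ hforth (Submodule.smul_mem _ _ hu)

/-- `Γ` vanishes on `D(A) ∩ H_sa`. -/
lemma sa_Γ_vanish {u : M.A.domain} (hu : (u : H) ∈ (M.cnsSubspace Complex.I Complex.I)ᗮ) :
    M.Γ u = 0 := by
  set f := M.A u + Complex.I • (u : H) with hfdef
  have harg : M.A u - (-Complex.I) • (u : H) = f := by rw [hfdef]; module
  have hf : M.R (-Complex.I) f = (u : H) := by
    rw [← harg]; exact M.R_left (-Complex.I) himI u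
  have hforth : f ∈ (M.cnsSubspace Complex.I Complex.I)ᗮ :=
    Submodule.add_mem _ (M.sa_A_mem hu) (Submodule.smul_mem _ _ hu)
  have hueq : u = (⟨M.R (-Complex.I) f, M.R_mem _ himI f⟩ : M.A.domain) :=
    Subtype.ext hf.symm
  have hΓu : M.Γ u = M.ΓR (-Complex.I) f := by
    rw [hueq]
    exact (M.ΓR_spec (-Complex.I) himI f).symm
  have hz : ∀ e : E, ⟪e, M.Γ u⟫ = 0 := by
    intro e
    rw [hΓu, ← ContinuousLinearMap.adjoint_inner_left]
    exact (Submodule.mem_orthogonal _ _).mp hforth _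
      (M.MSet_subset_cns (Or.inl ⟨e, rfl⟩))
  have := hz (M.Γ u)
  exact inner_self_eq_zero.mp this

/-- `Γ_* (A^* - i)⁻¹` vanishes on `H_sa`. -/
lemma sa_ΓsRs_vanish {f : H} (hf : f ∈ (M.cnsSubspace Complex.I Complex.I)ᗮ) :
    M.ΓsRs Complex.I f = 0 := by
  have hz : ∀ e : Es, ⟪e, M.ΓsRs Complex.I f⟫ = 0 := by
    intro e
    rw [← ContinuousLinearMap.adjoint_inner_left]
    exact (Submodule.mem_orthogonal _ _).mp hf _
      (M.MSet_subset_cns (Or.inr ⟨e, rfl⟩))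
  exact inner_self_eq_zero.mp (hz (M.ΓsRs Complex.I f))

lemma himI' : (0:ℝ) < (Complex.I).im := by simp

/-- Statement (ii): the restriction of `A` to `H_sa` is selfadjoint. -/
lemma sa_selfadjoint : IsSelfAdjointOn M.A (M.cnsSubspace Complex.I Complex.I)ᗮ := by
  obtain ⟨P', hP', hdom⟩ := M.sa_invariant
  refine ⟨?_, ?_, ?_, ?_, ?_⟩
  · -- density
    intro x hx
    rw [mem_closure_iff_seq_limit]
    obtain ⟨useq, huseq, hlim⟩ := mem_closure_iff_seq_limit.mp (M.dense_dom x)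
    refine ⟨fun n => P' (useq n), fun n => ?_, ?_⟩
    · obtain ⟨hmem, _⟩ := hdom ⟨useq n, huseq n⟩
      exact ⟨hP'.mem _, hmem⟩
    · have h1 : Filter.Tendsto (fun n => P' (useq n)) Filter.atTop (nhds (P' x)) :=
        (P'.continuous.tendsto x).comp hlim
      rwa [hP'.id_of_mem x hx] at h1
  · -- A maps into H_sa
    exact fun u hu => M.sa_A_mem hu
  · -- symmetry
    intro u v hu hv
    have hl := M.lagrange u v
    rw [M.sa_Γ_vanish hv, inner_zero_left, mul_zero, sub_eq_zero] at hl
    exact hl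
  · -- surjectivity of A - i
    intro f hf
    set vt : M.A.adjoint.domain := ⟨M.Rs Complex.I f, M.Rs_mem Complex.I himI' f⟩ with hvt
    have hΓsv : M.Γs vt = 0 := by
      have := (M.ΓsRs_spec Complex.I himI' f).symm
      rw [this]
      exact M.sa_ΓsRs_vanish hf
    have hdef := M.defect_star (-Complex.I) himI vt
    rw [conj_neg_I, hΓsv, map_zero, smul_zero, add_zero] at hdef
    have hmem : (vt : H) ∈ M.A.domain := by
      rw [hdef]
      exact M.R_mem (-Complex.I) himI _
    refine ⟨⟨(vt : H), hmem⟩, M.sa_Rs_base hf, ?_⟩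
    have h1 : (⟨(vt : H), hmem⟩ : M.A.domain)
        = ⟨M.R (-Complex.I) (M.A.adjoint vt - (-Complex.I) • (vt : H)),
            M.R_mem _ himI _⟩ := Subtype.ext hdef
    have h2 := M.R_right (-Complex.I) himI (M.A.adjoint vt - (-Complex.I) • (vt : H))
    have h3 : M.A ⟨(vt : H), hmem⟩ = M.A.adjoint vt := by
      rw [h1]
      have h4 : M.R (-Complex.I) (M.A.adjoint vt - (-Complex.I) • (vt : H)) = (vt : H) := by
        rw [← hdef]
      linear_combination (norm := module) h2 - Complex.I • h4
    have h5 : M.A.adjoint vt - Complex.I • (vt : H) = f := M.Rs_right Complex.I himI' f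
    rw [h3]
    exact h5
  · -- surjectivity of A + i
    intro f hf
    refine ⟨⟨M.R (-Complex.I) f, M.R_mem _ himI f⟩, M.sa_R_base hf, ?_⟩
    have h2 := M.R_right (-Complex.I) himI f
    linear_combination (norm := module) h2


end StrausSetting

section Neumann

open Filter

/-- If `T2 = T1 + c • T2 T1` with `‖c‖ ‖T1‖ < 1`, and the closed submodule `W` is invariant
under `T1`, then it is invariant under `T2`. -/
lemma invariant_step {T1 T2 : H →L[ℂ] H} {c : ℂ} {B1 B2 : ℝ}
    (hid : ∀ h : H, T2 h = T1 h + c • T2 (T1 h))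
    (hb1 : ∀ h : H, ‖T1 h‖ ≤ B1 * ‖h‖) (hb2 : ∀ h : H, ‖T2 h‖ ≤ B2 * ‖h‖)
    (hB1 : 0 ≤ B1) (hB2 : 0 ≤ B2) (hsmall : ‖c‖ * B1 < 1)
    {W : Submodule ℂ H} (hW : IsClosed (W : Set H))
    (h1 : ∀ w ∈ W, T1 w ∈ W) : ∀ w ∈ W, T2 w ∈ W := by
  have hq0 : (0:ℝ) ≤ ‖c‖ * B1 := mul_nonneg (norm_nonneg c) hB1
  have key : ∀ n : ℕ, ∀ w ∈ W, ∃ p ∈ W, ‖T2 w - p‖ ≤ (‖c‖ * B1) ^ n * (B2 * ‖w‖) := by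
    intro n
    induction n with
    | zero =>
      intro w hw
      exact ⟨0, W.zero_mem, by simpa using hb2 w⟩
    | succ n ih =>
      intro w hw
      obtain ⟨p', hp', hv'⟩ := ih (T1 w) (h1 w hw)
      refine ⟨T1 w + c • p', W.add_mem (h1 w hw) (W.smul_mem _ hp'), ?_⟩
      have he : T2 w - (T1 w + c • p') = c • (T2 (T1 w) - p') := by
        rw [hid w]; module
      rw [he, norm_smul, pow_succ]
      have h3 : ‖T1 w‖ ≤ B1 * ‖w‖ := hb1 w
      have h4 : (0:ℝ) ≤ (‖c‖ * B1) ^ n := pow_nonneg hq0 n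
      have h5 : ‖c‖ * ‖T2 (T1 w) - p'‖ ≤ ‖c‖ * ((‖c‖ * B1) ^ n * (B2 * ‖T1 w‖)) :=
        mul_le_mul_of_nonneg_left hv' (norm_nonneg c)
      have h6 : ‖c‖ * ((‖c‖ * B1) ^ n * (B2 * ‖T1 w‖))
          ≤ (‖c‖ * B1) ^ n * (‖c‖ * B1) * (B2 * ‖w‖) := by
        nlinarith [mul_le_mul_of_nonneg_left h3
          (mul_nonneg (mul_nonneg h4 (norm_nonneg c)) hB2), norm_nonneg c]
      linarith
  intro w hw
  choose p hpW hpb using fun n => key n w hw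
  have htend : Tendsto p atTop (nhds (T2 w)) := by
    rw [tendsto_iff_norm_sub_tendsto_zero]
    have h0 : Tendsto (fun n : ℕ => (‖c‖ * B1) ^ n * (B2 * ‖w‖)) atTop (nhds 0) := by
      have := (tendsto_pow_atTop_nhds_zero_of_lt_one hq0 hsmall).mul_const (B2 * ‖w‖)
      simpa using this
    exact squeeze_zero (fun n => norm_nonneg _)
      (fun n => by rw [norm_sub_rev]; exact hpb n) h0
  exact hW.mem_of_tendsto htend (Filter.Eventually.of_forall hpW)

lemma ofReal_mul_I_im (r : ℝ) : (((r : ℂ)) * Complex.I).im = r := by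
  simp

lemma neg_ofReal_mul_I_im (r : ℝ) : ((-(r : ℂ)) * Complex.I).im = -r := by
  simp

lemma norm_sq_complex (w : ℂ) : ‖w‖ ^ 2 = w.re ^ 2 + w.im ^ 2 := by
  rw [Complex.sq_norm, Complex.normSq_apply]
  ring

end Neumann

namespace StrausSetting

variable (M : StrausSetting H E Es)

/-- A closed subspace invariant under `R(-i)` is invariant under every `R z`, `Im z < 0`. -/
lemma W_R_inv {W : Submodule ℂ H} (hW : IsClosed (W : Set H))
    (hbase : ∀ w ∈ W, M.R (-Complex.I) w ∈ W) :
    ∀ z : ℂ, z.im < 0 → ∀ w ∈ W, M.R z w ∈ W := by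
  have hb : ∀ z : ℂ, z.im < 0 → ∀ h : H, ‖M.R z h‖ ≤ (1 / (-z.im)) * ‖h‖ := by
    intro z hz h
    calc ‖M.R z h‖ ≤ ‖h‖ / (-z.im) := M.R_norm_le z hz h
      _ = (1 / (-z.im)) * ‖h‖ := by ring
  have step : ∀ z1 z2 : ℂ, z1.im < 0 → z2.im < 0 → ‖z2 - z1‖ < -z1.im →
      (∀ w ∈ W, M.R z1 w ∈ W) → ∀ w ∈ W, M.R z2 w ∈ W := by
    intro z1 z2 h1 h2 hdist hinv
    have hB1 : (0:ℝ) ≤ 1 / (-z1.im) := le_of_lt (one_div_pos.mpr (by linarith))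
    have hB2 : (0:ℝ) ≤ 1 / (-z2.im) := le_of_lt (one_div_pos.mpr (by linarith))
    refine invariant_step (fun h => M.R_id z2 z1 h2 h1 h) (hb z1 h1) (hb z2 h2)
      hB1 hB2 ?_ hW hinv
    rw [mul_one_div, div_lt_one (by linarith)]
    exact hdist
  have t_pos : ∀ n : ℕ, (0:ℝ) < (3/2 : ℝ) ^ n := fun n => by positivity
  have vert : ∀ n : ℕ, ∀ w ∈ W,
      M.R (-((((3/2 : ℝ) ^ n : ℝ)) : ℂ) * Complex.I) w ∈ W := by
    intro n
    induction n with
    | zero =>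
      have he : (-((((3/2 : ℝ) ^ 0 : ℝ)) : ℂ) * Complex.I) = -Complex.I := by
        norm_num
      rw [he]
      exact hbase
    | succ n ih =>
      refine step (-((((3/2 : ℝ) ^ n : ℝ)) : ℂ) * Complex.I)
        (-((((3/2 : ℝ) ^ (n+1) : ℝ)) : ℂ) * Complex.I) ?_ ?_ ?_ ih
      · rw [neg_ofReal_mul_I_im]; linarith [t_pos n]
      · rw [neg_ofReal_mul_I_im]; linarith [t_pos (n+1)]
      · rw [neg_ofReal_mul_I_im, neg_neg]
        have he : (-((((3/2 : ℝ) ^ (n+1) : ℝ)) : ℂ) * Complex.I)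
            - (-((((3/2 : ℝ) ^ n : ℝ)) : ℂ) * Complex.I)
            = (((-((1/2 : ℝ) * (3/2 : ℝ) ^ n) : ℝ)) : ℂ) * Complex.I := by
          push_cast
          ring
        rw [he, norm_mul, Complex.norm_I, mul_one, Complex.norm_real,
          Real.norm_eq_abs, abs_neg, abs_of_nonneg (by positivity)]
        nlinarith [t_pos n]
  intro z hz w hw
  obtain ⟨n, hn⟩ := pow_unbounded_of_one_lt
    ((z.re ^ 2 + z.im ^ 2) / (2 * (-z.im))) (by norm_num : (1:ℝ) < 3/2)
  refine step (-((((3/2 : ℝ) ^ n : ℝ)) : ℂ) * Complex.I) z ?_ hz ?_ (vert n) w hw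
  · rw [neg_ofReal_mul_I_im]; linarith [t_pos n]
  · rw [neg_ofReal_mul_I_im, neg_neg]
    set t : ℝ := (3/2 : ℝ) ^ n with ht
    have hD : z.re ^ 2 + z.im ^ 2 < 2 * (-z.im) * t := by
      rw [div_lt_iff₀ (by linarith)] at hn
      linarith
    have hre : (z - (-((t : ℂ)) * Complex.I)).re = z.re := by simp
    have him : (z - (-((t : ℂ)) * Complex.I)).im = z.im + t := by simp
    have hlt : ‖z - (-((t : ℂ)) * Complex.I)‖ ^ 2 < t ^ 2 := by
      rw [norm_sq_complex, hre, him]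
      nlinarith
    have := lt_of_pow_lt_pow_left₀ 2 (le_of_lt (t_pos n)) hlt
    exact this

/-- A closed subspace invariant under `Rs i` is invariant under every `Rs z`, `Im z > 0`. -/
lemma W_Rs_inv {W : Submodule ℂ H} (hW : IsClosed (W : Set H))
    (hbase : ∀ w ∈ W, M.Rs Complex.I w ∈ W) :
    ∀ z : ℂ, 0 < z.im → ∀ w ∈ W, M.Rs z w ∈ W := by
  have hb : ∀ z : ℂ, 0 < z.im → ∀ h : H, ‖M.Rs z h‖ ≤ (1 / z.im) * ‖h‖ := by
    intro z hz h
    calc ‖M.Rs z h‖ ≤ ‖h‖ / z.im := M.Rs_norm_le z hz h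
      _ = (1 / z.im) * ‖h‖ := by ring
  have step : ∀ z1 z2 : ℂ, 0 < z1.im → 0 < z2.im → ‖z2 - z1‖ < z1.im →
      (∀ w ∈ W, M.Rs z1 w ∈ W) → ∀ w ∈ W, M.Rs z2 w ∈ W := by
    intro z1 z2 h1 h2 hdist hinv
    have hB1 : (0:ℝ) ≤ 1 / z1.im := le_of_lt (one_div_pos.mpr (by linarith))
    have hB2 : (0:ℝ) ≤ 1 / z2.im := le_of_lt (one_div_pos.mpr (by linarith))
    refine invariant_step (fun h => M.Rs_id z2 z1 h2 h1 h) (hb z1 h1) (hb z2 h2)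
      hB1 hB2 ?_ hW hinv
    rw [mul_one_div, div_lt_one (by linarith)]
    exact hdist
  have t_pos : ∀ n : ℕ, (0:ℝ) < (3/2 : ℝ) ^ n := fun n => by positivity
  have vert : ∀ n : ℕ, ∀ w ∈ W,
      M.Rs (((((3/2 : ℝ) ^ n : ℝ)) : ℂ) * Complex.I) w ∈ W := by
    intro n
    induction n with
    | zero =>
      have he : ((((3/2 : ℝ) ^ 0 : ℝ) : ℂ) * Complex.I) = Complex.I := by
        norm_num
      rw [he]
      exact hbase
    | succ n ih =>
      refine step (((((3/2 : ℝ) ^ n : ℝ)) : ℂ) * Complex.I)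
        (((((3/2 : ℝ) ^ (n+1) : ℝ)) : ℂ) * Complex.I) ?_ ?_ ?_ ih
      · rw [ofReal_mul_I_im]; exact t_pos n
      · rw [ofReal_mul_I_im]; exact t_pos (n+1)
      · rw [ofReal_mul_I_im]
        have he : (((((3/2 : ℝ) ^ (n+1) : ℝ)) : ℂ) * Complex.I)
            - (((((3/2 : ℝ) ^ n : ℝ)) : ℂ) * Complex.I)
            = ((((1/2 : ℝ) * (3/2 : ℝ) ^ n : ℝ)) : ℂ) * Complex.I := by
          push_cast
          ring
        rw [he, norm_mul, Complex.norm_I, mul_one, Complex.norm_real,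
          Real.norm_eq_abs, abs_of_nonneg (by positivity)]
        nlinarith [t_pos n]
  intro z hz w hw
  obtain ⟨n, hn⟩ := pow_unbounded_of_one_lt
    ((z.re ^ 2 + z.im ^ 2) / (2 * z.im)) (by norm_num : (1:ℝ) < 3/2)
  refine step (((((3/2 : ℝ) ^ n : ℝ)) : ℂ) * Complex.I) z ?_ hz ?_ (vert n) w hw
  · rw [ofReal_mul_I_im]; exact t_pos n
  · rw [ofReal_mul_I_im]
    set t : ℝ := (3/2 : ℝ) ^ n with ht
    have hD : z.re ^ 2 + z.im ^ 2 < 2 * z.im * t := by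
      rw [div_lt_iff₀ (by linarith)] at hn
      linarith
    have hre : (z - (((t : ℂ)) * Complex.I)).re = z.re := by simp
    have him : (z - (((t : ℂ)) * Complex.I)).im = z.im - t := by simp
    have hlt : ‖z - (((t : ℂ)) * Complex.I)‖ ^ 2 < t ^ 2 := by
      rw [norm_sq_complex, hre, him]
      nlinarith
    exact lt_of_pow_lt_pow_left₀ 2 (le_of_lt (t_pos n)) hlt


lemma conj_im_neg {z : ℂ} (hz : 0 < z.im) : ((starRingEnd ℂ) z).im < 0 := by
  simpa using hz

lemma conj_im_pos {z : ℂ} (hz : z.im < 0) : 0 < ((starRingEnd ℂ) z).im := by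
  simpa using hz

/-- Statement (iii): complete non-selfadjointness on `H_cns`. -/
lemma cns_completely_nonselfadjoint :
    ¬ ∃ W : Submodule ℂ H, IsClosed (W : Set H) ∧ W ≠ ⊥ ∧
        W ≤ M.cnsSubspace Complex.I Complex.I ∧
        RelInvariant M.A (M.cnsSubspace Complex.I Complex.I) W ∧
        RelInvariant M.A (M.cnsSubspace Complex.I Complex.I)
          ((M.cnsSubspace Complex.I Complex.I) ⊓ Wᗮ) ∧
        IsSelfAdjointOn M.A W := by
  rintro ⟨W, hWc, hWne, hWle, -, -, hdense, hmaps, hsymm, hsurjm, hsurjp⟩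
  -- Γ vanishes on D(A) ∩ W
  have hΓW : ∀ u : M.A.domain, (u : H) ∈ W → M.Γ u = 0 := by
    intro u hu
    have hl := M.lagrange u u
    rw [hsymm u u hu hu, sub_self] at hl
    rcases mul_eq_zero.mp hl.symm with h | h
    · exact absurd h Complex.I_ne_zero
    · exact inner_self_eq_zero.mp h
  -- the inner-product form of the Lagrange identity vanishing
  have hlagzero : ∀ u : M.A.domain, (u : H) ∈ W →
      ⟪(u : H), M.A u⟫ - ⟪M.A u, (u : H)⟫ = 0 := by
    intro u hu
    have hl := M.lagrange u u
    rw [hΓW u hu, inner_zero_left, mul_zero] at hl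
    exact hl
  -- invariance under R(-i)
  have hbaseR : ∀ w ∈ W, M.R (-Complex.I) w ∈ W := by
    intro w hw
    obtain ⟨u, huW, hueq⟩ := hsurjp w hw
    have harg : M.A u - (-Complex.I) • (u : H) = w := by
      rw [← hueq]; module
    have hRw : M.R (-Complex.I) w = (u : H) := by
      rw [← harg]; exact M.R_left _ himI u
    rw [hRw]; exact huW
  -- invariance under Rs i, with identification of the image
  have hbaseRs' : ∀ w ∈ W, ∃ u : M.A.domain, (u : H) ∈ W ∧
      M.Rs Complex.I w = (u : H) ∧ M.A u - Complex.I • (u : H) = w := by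
    intro w hw
    obtain ⟨u, huW, hueq⟩ := hsurjm w hw
    have hdef := M.defect Complex.I himI' u
    rw [Complex.conj_I, hΓW u huW, map_zero, smul_zero, sub_zero] at hdef
    rw [hueq] at hdef
    exact ⟨u, huW, hdef.symm, hueq⟩
  have hbaseRs : ∀ w ∈ W, M.Rs Complex.I w ∈ W := by
    intro w hw
    obtain ⟨u, h1, h2, -⟩ := hbaseRs' w hw
    rw [h2]; exact h1
  have hRall := M.W_R_inv hWc hbaseR
  have hRsall := M.W_Rs_inv hWc hbaseRs
  -- ΓR(-i) vanishes on W
  have hΓRW : ∀ w ∈ W, M.ΓR (-Complex.I) w = 0 := by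
    intro w hw
    obtain ⟨u, huW, hueq⟩ := hsurjp w hw
    have harg : M.A u - (-Complex.I) • (u : H) = w := by
      rw [← hueq]; module
    have hRw : M.R (-Complex.I) w = (u : H) := by
      rw [← harg]; exact M.R_left _ himI u
    have h2 : M.ΓR (-Complex.I) w = M.Γ u := by
      rw [M.ΓR_spec (-Complex.I) himI w]
      congr 1
      exact Subtype.ext hRw
    rw [h2]; exact hΓW u huW
  -- ΓsRs i vanishes on W
  have hΓsW : ∀ w ∈ W, M.ΓsRs Complex.I w = 0 := by
    intro w hw
    obtain ⟨u, huW, hRseq, hueq⟩ := hbaseRs' w hw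
    set vt : M.A.adjoint.domain := ⟨M.Rs Complex.I w, M.Rs_mem _ himI' w⟩ with hvt
    have hspec : M.ΓsRs Complex.I w = M.Γs vt := M.ΓsRs_spec _ himI' w
    have hAs : M.A.adjoint vt - Complex.I • (vt : H) = w := M.Rs_right _ himI' w
    have hvteq : (vt : H) = (u : H) := hRseq
    have hAseq : M.A.adjoint vt = M.A u := by
      have h3 : M.A.adjoint vt = w + Complex.I • (vt : H) := by
        linear_combination (norm := module) hAs
      rw [h3, hvteq, ← hueq]
      module
    have hls := M.lagrange_star vt vt
    rw [hAseq, hvteq] at hls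
    have hc : -Complex.I * ⟪M.Γs vt, M.Γs vt⟫ = 0 := by
      rw [← hls]
      exact hlagzero u huW
    rcases mul_eq_zero.mp hc with h | h
    · exact absurd (neg_eq_zero.mp h) Complex.I_ne_zero
    · rw [hspec]
      exact inner_self_eq_zero.mp h
  -- every element of W is orthogonal to H_cns
  have horth : ∀ w ∈ W, w ∈ (M.cnsSubspace Complex.I Complex.I)ᗮ := by
    intro w hw
    rw [Submodule.mem_orthogonal]
    intro g hg
    suffices hK : ∀ g' ∈ M.cnsSubspace Complex.I Complex.I, (⟪w, g'⟫ : ℂ) = 0 by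
      rw [← inner_conj_symm, hK g hg, map_zero]
    intro g' hg'
    have hker : M.cnsSubspace Complex.I Complex.I ≤ LinearMap.ker ((innerSL ℂ w : H →L[ℂ] ℂ) : H →ₗ[ℂ] ℂ) := by
      apply Submodule.topologicalClosure_minimal
      · rw [Submodule.span_le]
        rintro y (⟨mu, x, hmu, hx, rfl⟩ | ⟨lam, x, hlam, hx, rfl⟩)
        · -- y = R mu x
          rw [SetLike.mem_coe, LinearMap.mem_ker]
          have h1 : (⟪w, M.R mu x⟫ : ℂ)
              = (starRingEnd ℂ) ⟪M.R mu x, w⟫ := (inner_conj_symm _ _).symm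
          have h2 : ⟪M.R mu x, w⟫ = ⟪x, M.Rs ((starRingEnd ℂ) mu) w⟫ :=
            M.R_Rs_adj mu hmu x w
          have hy' : M.Rs ((starRingEnd ℂ) mu) w ∈ W :=
            hRsall _ (conj_im_pos hmu) w hw
          have h3 : (⟪x, M.Rs ((starRingEnd ℂ) mu) w⟫ : ℂ) = 0 := by
            rcases hx with ⟨e, rfl⟩ | ⟨e, rfl⟩
            · rw [ContinuousLinearMap.adjoint_inner_left, hΓRW _ hy', inner_zero_right]
            · rw [ContinuousLinearMap.adjoint_inner_left, hΓsW _ hy', inner_zero_right]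
          show (⟪w, M.R mu x⟫ : ℂ) = 0
          rw [h1, h2, h3, map_zero]
        · -- y = Rs lam x
          rw [SetLike.mem_coe, LinearMap.mem_ker]
          have h2 : ⟪M.R ((starRingEnd ℂ) lam) w, x⟫ = ⟪w, M.Rs lam x⟫ := by
            have := M.R_Rs_adj ((starRingEnd ℂ) lam) (conj_im_neg hlam) w x
            rwa [Complex.conj_conj] at this
          have hy'' : M.R ((starRingEnd ℂ) lam) w ∈ W :=
            hRall _ (conj_im_neg hlam) w hw
          have h3 : (⟪M.R ((starRingEnd ℂ) lam) w, x⟫ : ℂ) = 0 := by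
            rcases hx with ⟨e, rfl⟩ | ⟨e, rfl⟩
            · rw [ContinuousLinearMap.adjoint_inner_right, hΓRW _ hy'', inner_zero_left]
            · rw [ContinuousLinearMap.adjoint_inner_right, hΓsW _ hy'', inner_zero_left]
          show (⟪w, M.Rs lam x⟫ : ℂ) = 0
          rw [← h2, h3]
      · exact ContinuousLinearMap.isClosed_ker _
    have := hker hg'
    rw [LinearMap.mem_ker] at this
    exact this
  -- conclude W = ⊥
  obtain ⟨w, hwW, hwne⟩ := (Submodule.ne_bot_iff W).mp hWne
  have h1 : w ∈ M.cnsSubspace Complex.I Complex.I := hWle hwW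
  have h2 := (Submodule.mem_orthogonal _ w).mp (horth w hwW) w h1
  exact hwne (inner_self_eq_zero.mp h2)

end StrausSetting

/-- With `H_cns = cnsSubspace` (formed with `λ' = λ'' = i`) and
`H_sa = H_cnsᗮ`: (i) `H_cns` is reducing for `A` (both `H_cns` and `H_sa` are invariant);
(ii) the restriction of `A` to `H_sa` is selfadjoint in `H_sa`; (iii) the restriction of
`A` to `H_cns` is completely non-selfadjoint: there is no nonzero closed subspace
`W ⊆ H_cns`, reducing for the restriction `A_cns`, on which the restriction of `A` is
selfadjoint. -/
theorem stmt18 (M : StrausSetting H E Es) :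
    PMapInvariant M.A (M.cnsSubspace Complex.I Complex.I) ∧
    PMapInvariant M.A (M.cnsSubspace Complex.I Complex.I)ᗮ ∧
    IsSelfAdjointOn M.A (M.cnsSubspace Complex.I Complex.I)ᗮ ∧
    ¬ ∃ W : Submodule ℂ H, IsClosed (W : Set H) ∧ W ≠ ⊥ ∧
        W ≤ M.cnsSubspace Complex.I Complex.I ∧
        RelInvariant M.A (M.cnsSubspace Complex.I Complex.I) W ∧
        RelInvariant M.A (M.cnsSubspace Complex.I Complex.I)
          ((M.cnsSubspace Complex.I Complex.I) ⊓ Wᗮ) ∧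
        IsSelfAdjointOn M.A W := by
  exact ⟨M.cns_invariant, M.sa_invariant, M.sa_selfadjoint,
    M.cns_completely_nonselfadjoint⟩

end
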